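/- Let N > 1, m > 1, 0 < R₁ < R₂, and d = (N-1)(R₂-R₁)/((m-1)R₁) + 1. Then the function w(x) = (R₂ - |x|)^d defined on the annulus A = {x ∈ ℝ^N : R₁ < |x| < R₂} satisfies -Δ_m w ≤ 0 in A, w ≤ (R₂-R₁)^d on {|x| = R₁}, and w = 0 on {|x| = R₂}. -/

import Mathlib

open Real

/-- Divergence of a vector field on Euclidean space. -/
noncomputable def vdiv {N : ℕ} (F : EuclideanSpace ℝ (Fin N) → EuclideanSpace ℝ (Fin N))
    (x : EuclideanSpace ℝ (Fin N)) : ℝ :=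
  ∑ i, fderiv ℝ F x (EuclideanSpace.single i 1) i

/-- The m-Laplacian `Δ_m u = div(|∇u|^{m-2} ∇u)`. -/
noncomputable def mLap {N : ℕ} (m : ℝ) (u : EuclideanSpace ℝ (Fin N) → ℝ)
    (x : EuclideanSpace ℝ (Fin N)) : ℝ :=
  vdiv (fun y => (‖gradient u y‖ ^ (m - 2)) • gradient u y) x

section helpers
variable {E : Type*} [NormedAddCommGroup E] [InnerProductSpace ℝ E] [CompleteSpace E]

omit [CompleteSpace E] in
lemma myHasFDerivAt_norm {x : E} (hx : x ≠ 0) :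
    HasFDerivAt (fun y : E => ‖y‖) (‖x‖⁻¹ • innerSL ℝ x) x := by
  have h2 : HasFDerivAt (fun y : E => ‖y‖ ^ (2:ℝ))
      (((2:ℝ) * ‖x‖ ^ ((2:ℝ) - 2)) • innerSL ℝ x) x := hasFDerivAt_norm_rpow x (by norm_num)
  have hxn : (0:ℝ) < ‖x‖ := norm_pos_iff.mpr hx
  have hs : HasDerivAt Real.sqrt (1 / (2 * Real.sqrt (‖x‖ ^ (2:ℝ)))) (‖x‖ ^ (2:ℝ)) :=
    Real.hasDerivAt_sqrt (by positivity)
  have := hs.comp_hasFDerivAt x h2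
  simp only [Function.comp_def] at this
  have heq : (fun y : E => Real.sqrt (‖y‖ ^ (2:ℝ))) = fun y : E => ‖y‖ := by
    funext y
    rw [show ((2:ℝ)) = ((2:ℕ):ℝ) by norm_num, Real.rpow_natCast]
    exact Real.sqrt_sq (norm_nonneg y)
  rw [heq] at this
  refine this.congr_fderiv ?_
  have : Real.sqrt (‖x‖ ^ (2:ℝ)) = ‖x‖ := by
    rw [show ((2:ℝ)) = ((2:ℕ):ℝ) by norm_num, Real.rpow_natCast]
    exact Real.sqrt_sq (norm_nonneg x)
  rw [this, smul_smul]
  congr 1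
  rw [Real.rpow_sub hxn]
  field_simp

lemma myHasGradientAt (R₂ d : ℝ) {y : E} (h0 : 0 < ‖y‖) (h2 : ‖y‖ < R₂) :
    HasGradientAt (fun y : E => (R₂ - ‖y‖) ^ d)
      ((-(d * (R₂ - ‖y‖) ^ (d - 1)) / ‖y‖) • y) y := by
  have hy : y ≠ 0 := norm_pos_iff.mp h0
  have hpos : (0:ℝ) < R₂ - ‖y‖ := by linarith
  have h1 : HasDerivAt (fun t : ℝ => R₂ - t) (-1) ‖y‖ := (hasDerivAt_id ‖y‖).const_sub R₂
  have h2' : HasDerivAt (fun s : ℝ => s ^ d) (d * (R₂ - ‖y‖) ^ (d - 1)) (R₂ - ‖y‖) :=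
    Real.hasDerivAt_rpow_const (Or.inl hpos.ne')
  have h3 : HasDerivAt (fun t : ℝ => (R₂ - t) ^ d) (d * (R₂ - ‖y‖) ^ (d - 1) * (-1)) ‖y‖ :=
    h2'.comp ‖y‖ h1
  have h4 := h3.comp_hasFDerivAt y (myHasFDerivAt_norm hy)
  rw [hasGradientAt_iff_hasFDerivAt]
  refine h4.congr_fderiv ?_
  ext v
  simp only [InnerProductSpace.toDual_apply_apply, ContinuousLinearMap.coe_smul',
    Pi.smul_apply, innerSL_apply_apply, real_inner_smul_left, smul_eq_mul]
  ring

end helpers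

lemma finalIneq (N : ℕ) (R₁ R₂ r α c A : ℝ) (hN1 : (0:ℝ) < (N:ℝ) - 1)
    (hR₁ : 0 < R₁) (hR : R₁ < R₂) (hx1 : R₁ < r) (hx2 : r < R₂)
    (hα : α = ((N:ℝ) - 1) * (R₂ - R₁) / R₁) (hc0 : c < 0)
    (hA : A = (α * (R₂ - r) ^ (α - 1) * (-1) * r - (R₂ - r) ^ α * 1) / r ^ 2) :
    0 ≤ (N:ℝ) * (c * ((R₂ - r) ^ α / r)) + c * A * r⁻¹ * r ^ 2 := by
  have hr0 : 0 < r := lt_trans hR₁ hx1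
  have hrpos : 0 < R₂ - r := by linarith
  -- final inequality
  have hsplit : (R₂ - r) ^ α = (R₂ - r) ^ (α - 1) * (R₂ - r) := by
    rw [← Real.rpow_add_one hrpos.ne' (α - 1)]
    congr 1; ring
  have hAr : (N:ℝ) * (c * ((R₂ - r) ^ α / r)) + (c * A * r⁻¹) * r ^ 2
      = c * ((R₂ - r) ^ (α - 1) * (((N:ℝ) - 1) * (R₂ - r) - α * r) / r) := by
    rw [hA, hsplit]
    field_simp
    ring
  rw [hAr]
  have hBneg : ((N:ℝ) - 1) * (R₂ - r) - α * r ≤ 0 := by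
    rw [hα]
    rw [sub_nonpos, div_mul_eq_mul_div, le_div_iff₀ hR₁]
    have hR₂0 : (0:ℝ) ≤ R₂ := by linarith
    have h1 : R₂ * R₁ ≤ R₂ * r := mul_le_mul_of_nonneg_left hx1.le hR₂0
    have key : (R₂ - r) * R₁ ≤ (R₂ - R₁) * r := by nlinarith [h1]
    calc ((N:ℝ) - 1) * (R₂ - r) * R₁ = ((N:ℝ) - 1) * ((R₂ - r) * R₁) := by ring
      _ ≤ ((N:ℝ) - 1) * ((R₂ - R₁) * r) := mul_le_mul_of_nonneg_left key hN1.le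
      _ = ((N:ℝ) - 1) * (R₂ - R₁) * r := by ring
  have : (R₂ - r) ^ (α - 1) * (((N:ℝ) - 1) * (R₂ - r) - α * r) / r ≤ 0 := by
    apply div_nonpos_of_nonpos_of_nonneg _ hr0.le
    exact mul_nonpos_of_nonneg_of_nonpos (Real.rpow_nonneg hrpos.le _) hBneg
  exact mul_nonneg_of_nonpos_of_nonpos hc0.le this

lemma mainLem (N : ℕ) (hN : 1 < N) (m : ℝ) (hm : 1 < m) (R₁ R₂ d : ℝ)
    (hR₁ : 0 < R₁) (hR : R₁ < R₂)
    (hd : d = ((N : ℝ) - 1) * (R₂ - R₁) / ((m - 1) * R₁) + 1)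
    (x : EuclideanSpace ℝ (Fin N)) (hx1 : R₁ < ‖x‖) (hx2 : ‖x‖ < R₂) :
      0 ≤ mLap m (fun y : EuclideanSpace ℝ (Fin N) => (R₂ - ‖y‖) ^ d) x := by
  set u : EuclideanSpace ℝ (Fin N) → ℝ := fun y => (R₂ - ‖y‖) ^ d with hu
  have hm1 : (0:ℝ) < m - 1 := by linarith
  have hN1 : (0:ℝ) < (N:ℝ) - 1 := by
    have : (1:ℝ) < (N:ℝ) := by exact_mod_cast hN
    linarith
  have hd1 : 1 < d := by
    have h : 0 < ((N : ℝ) - 1) * (R₂ - R₁) / ((m - 1) * R₁) :=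
      div_pos (mul_pos hN1 (by linarith)) (mul_pos hm1 hR₁)
    rw [hd]; linarith
  have hd0 : 0 < d := by linarith
  obtain ⟨α, hαdef⟩ : ∃ a : ℝ, a = (d - 1) * (m - 1) := ⟨_, rfl⟩
  have hα : α = ((N:ℝ) - 1) * (R₂ - R₁) / R₁ := by
    rw [hαdef, hd]
    field_simp
    ring
  have hα0 : 0 < α := by
    rw [hα]; exact div_pos (mul_pos hN1 (by linarith)) hR₁
  obtain ⟨c, hc⟩ : ∃ a : ℝ, a = -(d ^ (m - 1)) := ⟨_, rfl⟩
  have hc0 : c < 0 := by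
    rw [hc]; simp only [neg_neg, Left.neg_neg_iff]; positivity
  set G : EuclideanSpace ℝ (Fin N) → EuclideanSpace ℝ (Fin N) :=
    fun y => (c * ((R₂ - ‖y‖) ^ α / ‖y‖)) • y with hG
  set r : ℝ := ‖x‖ with hr
  have hr0 : 0 < r := lt_trans hR₁ hx1
  have hrpos : 0 < R₂ - r := by linarith
  have hx0 : x ≠ 0 := by rw [← norm_pos_iff]; exact hr0
  set U : Set (EuclideanSpace ℝ (Fin N)) := {y | 0 < ‖y‖ ∧ ‖y‖ < R₂} with hU
  have hUopen : IsOpen U := by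
    have : U = (fun y : EuclideanSpace ℝ (Fin N) => ‖y‖) ⁻¹' (Set.Ioo 0 R₂) := rfl
    rw [this]; exact isOpen_Ioo.preimage continuous_norm
  have hxU : x ∈ U := ⟨hr0, hx2⟩
  have hFG : ∀ y ∈ U, (‖gradient u y‖ ^ (m - 2)) • gradient u y = G y := by
    intro y ⟨hy0, hy2⟩
    have hypos : (0:ℝ) < R₂ - ‖y‖ := by linarith
    have hne : ‖y‖ ≠ 0 := ne_of_gt hy0
    have hgrad : gradient u y = ((-(d * (R₂ - ‖y‖) ^ (d - 1)) / ‖y‖) • y) :=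
      (myHasGradientAt R₂ d hy0 hy2).gradient
    rw [hgrad, hG, norm_smul, smul_smul]
    congr 1
    have habs : ‖(-(d * (R₂ - ‖y‖) ^ (d - 1)) / ‖y‖)‖ = d * (R₂ - ‖y‖) ^ (d - 1) / ‖y‖ := by
      rw [Real.norm_eq_abs, abs_div, abs_neg,
        abs_of_pos (by positivity : 0 < d * (R₂ - ‖y‖) ^ (d - 1)), abs_of_pos hy0]
    rw [habs, div_mul_cancel₀ _ hne]
    have e1 : (d * (R₂ - ‖y‖) ^ (d - 1)) ^ (m - 2)
        = d ^ (m - 2) * (R₂ - ‖y‖) ^ ((d - 1) * (m - 2)) := by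
      rw [Real.mul_rpow hd0.le (Real.rpow_nonneg hypos.le _), ← Real.rpow_mul hypos.le]
    have e2 : d ^ (m - 2) * d = d ^ (m - 1) := by
      nth_rewrite 2 [show d = d ^ (1:ℝ) by rw [Real.rpow_one]]
      rw [← Real.rpow_add hd0]; congr 1; ring
    have e3 : (R₂ - ‖y‖) ^ ((d - 1) * (m - 2)) * (R₂ - ‖y‖) ^ (d - 1) = (R₂ - ‖y‖) ^ α := by
      rw [← Real.rpow_add hypos, hαdef]; ring_nf
    calc (d * (R₂ - ‖y‖) ^ (d - 1)) ^ (m - 2) * (-(d * (R₂ - ‖y‖) ^ (d - 1)) / ‖y‖)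
        = -(d ^ (m - 2) * d * ((R₂ - ‖y‖) ^ ((d - 1) * (m - 2)) * (R₂ - ‖y‖) ^ (d - 1))) / ‖y‖ := by
          rw [e1]; ring
      _ = c * ((R₂ - ‖y‖) ^ α / ‖y‖) := by rw [e2, e3, hc]; ring
  obtain ⟨A, hA⟩ : ∃ a : ℝ, a = (α * (R₂ - r) ^ (α - 1) * (-1) * r - (R₂ - r) ^ α * 1) / r ^ 2 := ⟨_, rfl⟩
  have hnum : HasDerivAt (fun t : ℝ => (R₂ - t) ^ α) (α * (R₂ - r) ^ (α - 1) * (-1)) r :=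
    (Real.hasDerivAt_rpow_const (Or.inl hrpos.ne')).comp r ((hasDerivAt_id r).const_sub R₂)
  have hdiv : HasDerivAt (fun t : ℝ => (R₂ - t) ^ α / t) A r := by
    rw [hA]; exact hnum.div (hasDerivAt_id r) hr0.ne'
  have hψ : HasDerivAt (fun t : ℝ => c * ((R₂ - t) ^ α / t)) (c * A) r := hdiv.const_mul c
  have hs : HasFDerivAt (fun y : EuclideanSpace ℝ (Fin N) => c * ((R₂ - ‖y‖) ^ α / ‖y‖))
      ((c * A) • (r⁻¹ • innerSL ℝ x)) x := by
    have := hψ.comp_hasFDerivAt x (myHasFDerivAt_norm hx0)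
    simpa [Function.comp_def, smul_smul] using this
  have hGd : HasFDerivAt G ((c * ((R₂ - r) ^ α / r)) • ContinuousLinearMap.id ℝ (EuclideanSpace ℝ (Fin N))
      + ((c * A) • (r⁻¹ • innerSL ℝ x)).smulRight x) x := hs.smul (hasFDerivAt_id x)
  have hEq : (fun y => (‖gradient u y‖ ^ (m - 2)) • gradient u y) =ᶠ[nhds x] G :=
    Filter.eventually_of_mem (hUopen.mem_nhds hxU) hFG
  have hfd : fderiv ℝ (fun y => (‖gradient u y‖ ^ (m - 2)) • gradient u y) x
      = (c * ((R₂ - r) ^ α / r)) • ContinuousLinearMap.id ℝ (EuclideanSpace ℝ (Fin N))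
        + ((c * A) • (r⁻¹ • innerSL ℝ x)).smulRight x := by
    rw [hEq.fderiv_eq, hGd.fderiv]
  have hsum : ∑ i, x i * x i = r ^ 2 := by
    have h := EuclideanSpace.norm_eq x
    have h2 : r ^ 2 = ∑ i, ‖x i‖ ^ 2 := by
      rw [hr, h, Real.sq_sqrt]
      positivity
    rw [h2]
    apply Finset.sum_congr rfl
    intro i _
    rw [Real.norm_eq_abs, sq_abs, sq]
  have hterm : ∀ i : Fin N, ((((c * ((R₂ - r) ^ α / r)) • ContinuousLinearMap.id ℝ (EuclideanSpace ℝ (Fin N))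
      + ((c * A) • (r⁻¹ • innerSL ℝ x)).smulRight x) (EuclideanSpace.single i 1)) i)
      = c * ((R₂ - r) ^ α / r) + (c * A * r⁻¹) * (x i * x i) := by
    intro i
    simp only [ContinuousLinearMap.add_apply, ContinuousLinearMap.smul_apply,
      ContinuousLinearMap.id_apply, ContinuousLinearMap.smulRight_apply, innerSL_apply_apply]
    have hinner : (inner ℝ x (EuclideanSpace.single i (1:ℝ)) : ℝ) = x i := by
      rw [EuclideanSpace.inner_single_right]; simp
    simp only [ContinuousLinearMap.coe_smul', Pi.smul_apply, PiLp.add_apply,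
      PiLp.smul_apply, smul_eq_mul, EuclideanSpace.single_apply, hinner, if_pos rfl, if_true]
    ring
  have hvdiv : mLap m u x = (N:ℝ) * (c * ((R₂ - r) ^ α / r)) + (c * A * r⁻¹) * r ^ 2 := by
    rw [mLap, vdiv]
    simp only [hfd, hterm]
    rw [Finset.sum_add_distrib, Finset.sum_const, Finset.card_univ, Fintype.card_fin,
      nsmul_eq_mul, ← Finset.mul_sum, hsum]
  rw [hvdiv]
  exact finalIneq N R₁ R₂ r α c A hN1 hR₁ hR hx1 hx2 hα hc0 hA

theorem stmt8 (N : ℕ) (hN : 1 < N) (m : ℝ) (hm : 1 < m) (R₁ R₂ d : ℝ)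
    (hR₁ : 0 < R₁) (hR : R₁ < R₂)
    (hd : d = ((N : ℝ) - 1) * (R₂ - R₁) / ((m - 1) * R₁) + 1) :
    (∀ x : EuclideanSpace ℝ (Fin N), R₁ < ‖x‖ → ‖x‖ < R₂ →
      -mLap m (fun y : EuclideanSpace ℝ (Fin N) => (R₂ - ‖y‖) ^ d) x ≤ 0) ∧
    (∀ x : EuclideanSpace ℝ (Fin N), ‖x‖ = R₁ → (R₂ - ‖x‖) ^ d ≤ (R₂ - R₁) ^ d) ∧
    (∀ x : EuclideanSpace ℝ (Fin N), ‖x‖ = R₂ → (R₂ - ‖x‖) ^ d = 0) := by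
  refine ⟨fun x hx1 hx2 => ?_, fun x hx => by rw [hx], fun x hx => ?_⟩
  · have := mainLem N hN m hm R₁ R₂ d hR₁ hR hd x hx1 hx2
    linarith
  · rw [hx, sub_self]
    have hd0 : d ≠ 0 := by
      have hm1 : (0:ℝ) < m - 1 := by linarith
      have hN1 : (0:ℝ) < (N:ℝ) - 1 := by
        have : (1:ℝ) < (N:ℝ) := by exact_mod_cast hN
        linarith
      have h : 0 < ((N : ℝ) - 1) * (R₂ - R₁) / ((m - 1) * R₁) :=
        div_pos (mul_pos hN1 (by linarith)) (mul_pos hm1 hR₁)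
      rw [hd]; positivity
    exact Real.zero_rpow hd0
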